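/- If H and J are cognate hypergraphs on the same carrier C (i.e., related by the reflexive-symmetric-transitive closure of the enhancement relation), then for every Z ⊆ C, the restriction H_Z is connected if and only if J_Z is connected. -/

import Mathlib

namespace HG

variable {α : Type*} [DecidableEq α]

/-- The carrier of a hypergraph: the union of its members. -/
def carrier (H : Finset (Finset α)) : Finset α := H.sup id

/-- A hypergraph (on its carrier) is a finite family of sets not containing `∅`. -/
def IsHypergraph (H : Finset (Finset α)) : Prop := ∅ ∉ H

/-- The restriction `H_Y = {X ∈ H ∣ X ⊆ Y}`. -/
def restrict (H : Finset (Finset α)) (Y : Finset α) : Finset (Finset α) :=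
  H.filter (· ⊆ Y)

/-- `x` and `y` are joined by a path of `H`: a nonempty sequence of distinct members
of `H`, consecutive members intersecting, the first containing `x`, the last `y`. -/
def Joined (H : Finset (Finset α)) (x y : α) : Prop :=
  ∃ (X : Finset α) (l : List (Finset α)),
    (X :: l).Nodup ∧ (∀ Z ∈ X :: l, Z ∈ H) ∧
    (X :: l).Chain' (fun A B => (A ∩ B).Nonempty) ∧
    x ∈ X ∧ y ∈ (X :: l).getLast (List.cons_ne_nil X l)

/-- Path-connectedness of a hypergraph: any two carrier elements are joined. -/
def Conn (H : Finset (Finset α)) : Prop :=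
  ∀ x ∈ carrier H, ∀ y ∈ carrier H, Joined H x y

/-- `P` is a hypergraph partition of `H`: a partition of `H` whose family of
carriers is a partition of the carrier of `H`. -/
def IsHGPartition (H : Finset (Finset α)) (P : Finset (Finset (Finset α))) : Prop :=
  (∀ Q ∈ P, Q ≠ ∅) ∧
  (∀ Q ∈ P, ∀ Q' ∈ P, Q ≠ Q' → Disjoint Q Q') ∧
  P.sup id = H ∧
  (∀ Q ∈ P, ∀ Q' ∈ P, Q ≠ Q' → Disjoint (carrier Q) (carrier Q'))

/-- A hypergraph is atomic when it contains all singletons of carrier elements. -/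
def Atomic (H : Finset (Finset α)) : Prop := ∀ x ∈ carrier H, {x} ∈ H

/-- A hypergraph is saturated when intersecting members have their union in it. -/
def Saturated (H : Finset (Finset α)) : Prop :=
  ∀ X ∈ H, ∀ Y ∈ H, (X ∩ Y).Nonempty → X ∪ Y ∈ H

/-- `Y` is dispensable in `H` when `(H_Y) \ {Y}` is a connected hypergraph on `Y`. -/
def Dispensable (H : Finset (Finset α)) (Y : Finset α) : Prop :=
  IsHypergraph ((restrict H Y).erase Y) ∧
  carrier ((restrict H Y).erase Y) = Y ∧
  Conn ((restrict H Y).erase Y)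

/-- `J` enhances `H` when `J = H ∪ {Y}` for some `Y ∉ H` dispensable in `H`. -/
def Enhances (J H : Finset (Finset α)) : Prop :=
  ∃ Y, Dispensable H Y ∧ Y ∉ H ∧ J = insert Y H

/-- Cognation: the equivalence closure of the enhancement relation. -/
def Cognate (H J : Finset (Finset α)) : Prop :=
  Relation.EqvGen Enhances H J

/-- The finest hypergraph partition: one all of whose parts are connected. -/
def FinestHGPartition (H : Finset (Finset α)) (P : Finset (Finset (Finset α))) : Prop :=
  IsHGPartition H P ∧ ∀ Q ∈ P, Conn Q

/-- Constructions of a hypergraph, defined recursively. -/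
inductive IsConstruction : Finset (Finset α) → Finset (Finset α) → Prop
  | empty : IsConstruction ∅ ∅
  | conn {H K : Finset (Finset α)} {x : α} :
      (carrier H).Nonempty → Conn H → x ∈ carrier H →
      IsConstruction (restrict H ((carrier H).erase x)) K →
      IsConstruction H (insert (carrier H) K)
  | parts {H : Finset (Finset α)} {P : Finset (Finset (Finset α))}
      {K : Finset (Finset α) → Finset (Finset α)} :
      2 ≤ (carrier H).card → ¬ Conn H → 2 ≤ P.card → FinestHGPartition H P →
      (∀ Q ∈ P, IsConstruction Q (K Q)) →
      IsConstruction H (P.sup K)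

/-- An `M`-antichain: at least two members of `M`, pairwise incomparable. -/
def IsAntichainIn (M S : Finset (Finset α)) : Prop :=
  S ⊆ M ∧ 2 ≤ S.card ∧ ∀ X ∈ S, ∀ Y ∈ S, X ≠ Y → ¬ X ⊆ Y ∧ ¬ Y ⊆ X

/-- `S` misses `H` when the union of `S` is not a member of `H`. -/
def Misses (H S : Finset (Finset α)) : Prop := S.sup id ∉ H

/-- `x` is `X`-superficial relative to `M`. -/
def Superficial (M : Finset (Finset α)) (X : Finset α) (x : α) : Prop :=
  x ∈ X ∧ ∀ Y ∈ M, Y ⊂ X → x ∉ Y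

/-- ASC-hypergraph: atomic, saturated and connected hypergraph. -/
def ASC (H : Finset (Finset α)) : Prop :=
  IsHypergraph H ∧ Atomic H ∧ Saturated H ∧ Conn H

end HG


namespace HG

variable {α : Type*} [DecidableEq α]

/-- One-step adjacency on vertices: some member of `H` contains both. -/
def Step (H : Finset (Finset α)) (x y : α) : Prop := ∃ X ∈ H, x ∈ X ∧ y ∈ X

lemma mem_carrier' {H : Finset (Finset α)} {x : α} : x ∈ carrier H ↔ ∃ X ∈ H, x ∈ X := by
  simp [carrier, Finset.mem_sup]

lemma joined_single {H : Finset (Finset α)} {X : Finset α} (hX : X ∈ H) {x y : α}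
    (hx : x ∈ X) (hy : y ∈ X) : Joined H x y :=
  ⟨X, [], by simp, by simp [hX], List.isChain_singleton _, hx, by simpa⟩

lemma joined_prepend {H : Finset (Finset α)} {X : Finset α} (hX : X ∈ H) {x b y : α}
    (hx : x ∈ X) (hb : b ∈ X) (h : Joined H b y) : Joined H x y := by
  obtain ⟨X', l, nodup, mem, chain, hbX', hy⟩ := h
  by_cases hXin : X ∈ X' :: l
  · obtain ⟨s, t, hst⟩ := List.append_of_mem hXin
    have hsuf : (X :: t) <:+ (X' :: l) := ⟨s, hst.symm⟩
    refine ⟨X, t, nodup.sublist hsuf.sublist, fun Z hZ => mem Z (hsuf.sublist.mem hZ),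
      chain.suffix hsuf, hx, ?_⟩
    have h2 : (X' :: l).getLast (List.cons_ne_nil X' l)
        = (s ++ X :: t).getLast (hst ▸ List.cons_ne_nil X' l) := by
      congr 1
    rw [h2, List.getLast_append_of_ne_nil _ (List.cons_ne_nil X t)] at hy
    exact hy
  · refine ⟨X, X' :: l, List.nodup_cons.mpr ⟨hXin, nodup⟩, ?_, ?_, hx, ?_⟩
    · intro Z hZ
      rcases List.mem_cons.mp hZ with rfl | hZ
      · exact hX
      · exact mem Z hZ
    · exact List.isChain_cons_cons.mpr ⟨⟨b, Finset.mem_inter.mpr ⟨hb, hbX'⟩⟩, chain⟩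
    · rwa [List.getLast_cons (List.cons_ne_nil X' l)]

lemma rtg_of_chain {H : Finset (Finset α)} :
    ∀ (l : List (Finset α)) (X : Finset α) (x y : α), (∀ Z ∈ X :: l, Z ∈ H) →
    (X :: l).Chain' (fun A B => (A ∩ B).Nonempty) → x ∈ X →
    y ∈ (X :: l).getLast (List.cons_ne_nil X l) → Relation.ReflTransGen (Step H) x y := by
  intro l
  induction l with
  | nil =>
      intro X x y mem _ hx hy
      simp only [List.getLast_singleton] at hy
      exact Relation.ReflTransGen.single ⟨X, mem X (by simp), hx, hy⟩
  | cons X' l ih =>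
      intro X x y mem chain hx hy
      obtain ⟨⟨z, hz⟩, chain'⟩ := List.isChain_cons_cons.mp chain
      rw [Finset.mem_inter] at hz
      refine Relation.ReflTransGen.trans
        (Relation.ReflTransGen.single ⟨X, mem X (by simp), hx, hz.1⟩) ?_
      refine ih X' z y (fun Z hZ => mem Z (List.mem_cons_of_mem _ hZ)) chain' hz.2 ?_
      rwa [List.getLast_cons (List.cons_ne_nil X' l)] at hy

lemma rtg_of_joined {H : Finset (Finset α)} {x y : α} (h : Joined H x y) :
    Relation.ReflTransGen (Step H) x y := by
  obtain ⟨X, l, -, mem, chain, hx, hy⟩ := h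
  exact rtg_of_chain l X x y mem chain hx hy

lemma joined_of_rtg {H : Finset (Finset α)} {x y : α}
    (h : Relation.ReflTransGen (Step H) x y) (hy : y ∈ carrier H) : Joined H x y := by
  induction h using Relation.ReflTransGen.head_induction_on with
  | refl =>
      obtain ⟨X, hX, hx⟩ := mem_carrier'.mp hy
      exact joined_single hX hx hx
  | head hstep _ ih =>
      obtain ⟨X, hX, hx, hb⟩ := hstep
      exact joined_prepend hX hx hb ih

lemma conn_iff_rtg {H : Finset (Finset α)} :
    Conn H ↔ ∀ x ∈ carrier H, ∀ y ∈ carrier H, Relation.ReflTransGen (Step H) x y :=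
  ⟨fun h x hx y hy => rtg_of_joined (h x hx y hy),
   fun h x hx y hy => joined_of_rtg (h x hx y hy) hy⟩

lemma enhances_conn_restrict {J H : Finset (Finset α)} (h : Enhances J H) (Z : Finset α) :
    Conn (restrict H Z) ↔ Conn (restrict J Z) := by
  obtain ⟨Y, ⟨-, hcar, hconn⟩, hYH, rfl⟩ := h
  have hYr : Y ∉ restrict H Y := fun hm => hYH (Finset.mem_filter.mp hm).1
  have herase : (restrict H Y).erase Y = restrict H Y := Finset.erase_eq_of_notMem hYr
  rw [herase] at hcar hconn
  by_cases hYZ : Y ⊆ Z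
  · have hsub : restrict H Y ⊆ restrict H Z := by
      intro X hX
      rw [restrict, Finset.mem_filter] at hX ⊢
      exact ⟨hX.1, hX.2.trans hYZ⟩
    have hYsub : Y ⊆ carrier (restrict H Z) := by
      rw [← hcar]
      intro a ha
      rw [mem_carrier'] at ha ⊢
      obtain ⟨X, hX, haX⟩ := ha
      exact ⟨X, hsub hX, haX⟩
    have hJZ : restrict (insert Y H) Z = insert Y (restrict H Z) := by
      simp [restrict, Finset.filter_insert, hYZ]
    have hcarJ : carrier (restrict (insert Y H) Z) = carrier (restrict H Z) := by
      rw [hJZ]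
      show (insert Y (restrict H Z)).sup id = (restrict H Z).sup id
      rw [Finset.sup_insert, id_eq, Finset.sup_eq_union]
      exact Finset.union_eq_right.mpr hYsub
    have key : ∀ a b, Step (restrict (insert Y H) Z) a b →
        Relation.ReflTransGen (Step (restrict H Z)) a b := by
      rintro a b ⟨X, hX, ha, hb⟩
      rw [hJZ, Finset.mem_insert] at hX
      rcases hX with rfl | hX
      · have hj := hconn a (hcar.symm ▸ ha) b (hcar.symm ▸ hb)
        exact Relation.ReflTransGen.mono (by rintro u v ⟨W, hW, h1, h2⟩; exact ⟨W, hsub hW, h1, h2⟩) _ _ (rtg_of_joined hj)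
      · exact Relation.ReflTransGen.single ⟨X, hX, ha, hb⟩
    rw [conn_iff_rtg, conn_iff_rtg, hcarJ]
    constructor
    · intro hc x hx y hy
      exact Relation.ReflTransGen.mono (by rintro a b ⟨X, hX, h1, h2⟩; exact
        ⟨X, hJZ ▸ Finset.mem_insert_of_mem hX, h1, h2⟩) _ _ (hc x hx y hy)
    · intro hc x hx y hy
      have h1 := hc x hx y hy
      clear hc hx hy
      induction h1 with
      | refl => exact Relation.ReflTransGen.refl
      | tail _ step ih => exact ih.trans (key _ _ step)
  · have : restrict (insert Y H) Z = restrict H Z := by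
      simp [restrict, Finset.filter_insert, hYZ]
    rw [this]

end HG

open HG

theorem cognate_restrict_connected_iff
    {α : Type*} [DecidableEq α]
    (H J : Finset (Finset α)) (hH : IsHypergraph H) (hJ : IsHypergraph J)
    (hc : Cognate H J) :
    ∀ Z ⊆ carrier H, (Conn (restrict H Z) ↔ Conn (restrict J Z)) := by
  intro Z _hZ
  clear _hZ hH hJ
  induction hc with
  | rel a b hab => exact (enhances_conn_restrict hab Z).symm
  | refl => exact Iff.rfl
  | symm _ _ _ ih => exact ih.symm
  | trans _ _ _ _ _ ih1 ih2 => exact ih1.trans ih2
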